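/- arXiv:1412.1533 — 3 statements merged into one kernel-verified Lean document; each statement's English description precedes it below -/
import Mathlib

section
/- Let R be a commutative Noetherian ring and M a nonzero finitely generated R-module with projdim_R(M) < ∞. Then projdim_R(M) = sup { i : Ext_R^i(M, R) ≠ 0 }, the supremum taken in ℕ ∪ {∞}. -/
open CategoryTheory

/-- `M` admits a projective resolution of length at most `n`. -/
def HasProjResLengthLE (R : Type) [Ring R] (M : Type) [AddCommGroup M] [Module R M]
    (n : ℕ) : Prop :=
  ∃ P : ProjectiveResolution (ModuleCat.of R M), ∀ i, n < i → Limits.IsZero (P.complex.X i)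

/-- The projective dimension of `M`, as the infimum in `ℕ∞` of the lengths of
projective resolutions of `M`. -/
noncomputable def projDim (R : Type) [Ring R] (M : Type) [AddCommGroup M] [Module R M] : ℕ∞ :=
  ⨅ (n : ℕ) (_ : HasProjResLengthLE R M n), (n : ℕ∞)

/-- The `n`-th Ext group `Ext_R^n(M, N)`. -/
noncomputable abbrev extGroup (R : Type) [CommRing R] (M N : Type) [AddCommGroup M] [Module R M]
    [AddCommGroup N] [Module R N] (n : ℕ) : Type _ :=
  ((Ext R (ModuleCat R) n).obj (Opposite.op (ModuleCat.of R M))).obj (ModuleCat.of R N)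


open CategoryTheory Limits

set_option linter.unusedSectionVars false
set_option maxHeartbeats 1000000

noncomputable section
universe v u
section Helper
variable {C : Type u} [Category.{v} C] [Abelian C]

/-- Build a projective resolution from a degreewise-projective complex together with
an exact augmentation. -/
noncomputable def mkProjRes {Z : C} (X : ChainComplex C ℕ)
    (hproj : ∀ n, Projective (X.X n)) (π₀ : X.X 0 ⟶ Z) (w : X.d 1 0 ≫ π₀ = 0)
    (hepi : Epi π₀) (hexact0 : (ShortComplex.mk (X.d 1 0) π₀ w).Exact)
    (hexact : ∀ n, X.ExactAt (n + 1)) :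
    ProjectiveResolution Z where
  complex := X
  projective := hproj
  π := (ChainComplex.toSingle₀Equiv _ _).symm ⟨π₀, w⟩
  quasiIso := ⟨fun n => by
    cases n with
    | zero =>
      rw [ChainComplex.quasiIsoAt₀_iff, ShortComplex.quasiIso_iff_of_zeros']
      · refine (ShortComplex.exact_and_epi_g_iff_of_iso ?_).2 ⟨hexact0, hepi⟩
        exact ShortComplex.isoMk (Iso.refl _) (Iso.refl _) (Iso.refl _)
            (by exact (Category.id_comp _).trans (Category.comp_id _).symm) (by simp [ChainComplex.toSingle₀Equiv_symm_apply_f_zero]; exact (Category.id_comp _).trans (Category.comp_id _).symm)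
      all_goals (simp <;> rfl)
    | succ n =>
      rw [quasiIsoAt_iff_exactAt']
      · exact hexact n
      · apply ChainComplex.exactAt_succ_single_obj⟩

end Helper


variable (R : Type) [CommRing R] [IsNoetherianRing R]

/-- A bundled finitely generated module. -/
structure FgMod where
  K : ModuleCat.{0} R
  fg : Module.Finite R K

namespace FgMod

variable {R}

/-- A chosen number of generators. -/
noncomputable def rk (A : FgMod R) : ℕ :=
  (@Module.Finite.exists_fin' R A.K _ _ _ A.fg).choose

/-- A chosen surjection from a finite free module. -/
noncomputable def p (A : FgMod R) : (Fin A.rk → R) →ₗ[R] A.K :=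
  (@Module.Finite.exists_fin' R A.K _ _ _ A.fg).choose_spec.choose

lemma p_surj (A : FgMod R) : Function.Surjective A.p :=
  (@Module.Finite.exists_fin' R A.K _ _ _ A.fg).choose_spec.choose_spec

/-- The syzygy: kernel of the chosen surjection. -/
noncomputable def next (A : FgMod R) : FgMod R :=
  ⟨ModuleCat.of R (LinearMap.ker A.p), Module.Finite.iff_fg.2 (IsNoetherian.noetherian _)⟩

/-- Iterated syzygies. -/
noncomputable def tower (A : FgMod R) : ℕ → FgMod R
  | 0 => A
  | n + 1 => (A.tower n).next

lemma tower_succ_eq (A : FgMod R) (n : ℕ) : A.tower (n+1) = A.next.tower n := by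
  induction n with
  | zero => rfl
  | succ n ih => show (A.tower (n+1)).next = _; rw [ih]; rfl

end FgMod

variable (M : Type) [AddCommGroup M] [Module R M] [Module.Finite R M]

/-- The base of the tower. -/
noncomputable def KM0 : FgMod R := ⟨ModuleCat.of R M, ‹_›⟩

/-- The tower of syzygies of `M`. -/
noncomputable def KM : ℕ → FgMod R := (KM0 R M).tower

/-- The free module at stage `n`. -/
noncomputable abbrev Xf (n : ℕ) : ModuleCat.{0} R := ModuleCat.of R (Fin ((KM R M n).rk) → R)

/-- The chosen surjection at stage `n`. -/
noncomputable abbrev pr (n : ℕ) : (Xf R M n) →ₗ[R] (KM R M n).K := (KM R M n).p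

/-- Inclusion of the `n+1`-st syzygy into the `n`-th free module. -/
noncomputable abbrev ι (n : ℕ) : ((KM R M (n+1)).K : Type) →ₗ[R] (Xf R M n) :=
  (LinearMap.ker (pr R M n)).subtype

/-- The differential. -/
noncomputable def dF (n : ℕ) : Xf R M (n+1) ⟶ Xf R M n :=
  ModuleCat.ofHom ((ι R M n).comp (pr R M (n+1)))

lemma pr_dF (n : ℕ) (x : Xf R M (n+1)) : pr R M n (dF R M n x) = 0 := by
  exact (pr R M (n+1) x).2

/-- The free resolution complex. -/
noncomputable def Fcx : ChainComplex (ModuleCat.{0} R) ℕ :=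
  ChainComplex.of (Xf R M) (dF R M) (fun n => by
    apply ConcreteCategory.hom_ext
    intro x
    show dF R M n (dF R M (n+1) x) = 0
    show (ι R M n) ((pr R M (n+1)) (dF R M (n+1) x)) = 0
    rw [pr_dF R M (n+1) x]
    simp)

lemma Fcx_d (n : ℕ) : (Fcx R M).d (n+1) n = dF R M n := by
  simp [Fcx]

lemma Fcx_X (n : ℕ) : (Fcx R M).X n = Xf R M n := rfl

instance Fcx_projective (n : ℕ) : Projective ((Fcx R M).X n) :=
  ModuleCat.projective_of_free.{0,0,0} (M := Xf R M n) (Pi.basisFun R (Fin ((KM R M n).rk)))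

lemma Fcx_exactAt (n : ℕ) : (Fcx R M).ExactAt (n+1) := by
  rw [HomologicalComplex.exactAt_iff' _ (n+2) (n+1) n (by simp) (by simp)]
  rw [ShortComplex.moduleCat_exact_iff]
  intro x hx
  -- hx : dF n x = 0, so pr (n+1) x = 0
  have hx' : (Fcx R M).d (n+1) n x = 0 := hx
  rw [Fcx_d] at hx'
  have hker : pr R M (n+1) x = 0 := by
    apply Subtype.ext
    exact hx'
  obtain ⟨y, hy⟩ := (KM R M (n+2)).p_surj ⟨x, hker⟩
  refine ⟨y, ?_⟩
  show (Fcx R M).d (n+2) (n+1) y = x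
  rw [Fcx_d]
  show (ι R M (n+1)) (pr R M (n+2) y) = x
  exact congrArg Subtype.val hy

/-- The augmentation map. -/
noncomputable def πF : (Fcx R M).X 0 ⟶ ModuleCat.of R M := ModuleCat.ofHom (pr R M 0)

lemma πF_w : (Fcx R M).d 1 0 ≫ πF R M = 0 := by
  apply ConcreteCategory.hom_ext
  intro x
  show (pr R M 0) ((Fcx R M).d 1 0 x) = 0
  rw [Fcx_d]
  exact pr_dF R M 0 x

/-- The finite free resolution of `M`. -/
noncomputable def Fres : ProjectiveResolution (ModuleCat.of R M) :=
  mkProjRes (Fcx R M) (fun _ => inferInstance) (πF R M) (πF_w R M)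
    ((ModuleCat.epi_iff_surjective _).2 ((KM R M 0).p_surj))
    (by
      rw [ShortComplex.moduleCat_exact_iff]
      intro x hx
      obtain ⟨y, hy⟩ := (KM R M 1).p_surj ⟨x, hx⟩
      refine ⟨y, ?_⟩
      show (Fcx R M).d 1 0 y = x
      rw [Fcx_d]
      show (ι R M 0) (pr R M 1 y) = x
      exact congrArg Subtype.val hy)
    (Fcx_exactAt R M)

-- Ext transfer lemmas
section ExtLemmas
open HomologicalComplex

variable {R}

lemma subsingleton_of_isZero {X : ModuleCat.{0} R} (h : IsZero X) : Subsingleton X := by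
  refine ⟨fun a b => ?_⟩
  have : (𝟙 X : X ⟶ X) = 0 := h.eq_of_src _ _
  calc a = (𝟙 X : X ⟶ X) a := rfl
    _ = (0 : X ⟶ X) a := by rw [this]
    _ = (𝟙 X : X ⟶ X) b := by rw [this]; rfl
    _ = b := rfl

lemma isZero_ext_of_isZero {Z Y : ModuleCat.{0} R} (P : ProjectiveResolution Z) (i : ℕ)
    (h : IsZero (P.complex.X i)) :
    IsZero (((Ext R (ModuleCat.{0} R) i).obj (Opposite.op Z)).obj Y) := by
  refine IsZero.of_iso ?_ (P.isoExt i Y)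
  rw [← HomologicalComplex.exactAt_iff_isZero_homology, HomologicalComplex.exactAt_iff]
  refine ShortComplex.exact_of_isZero_X₂ _ ?_
  rw [IsZero.iff_id_eq_zero]
  ext (x : _ ⟶ _)
  exact h.eq_of_src x 0

lemma subsingleton_homology_of_subsingleton_ext {Z Y : ModuleCat.{0} R}
    (P : ProjectiveResolution Z) (i : ℕ)
    (h : Subsingleton (((Ext R (ModuleCat.{0} R) i).obj (Opposite.op Z)).obj Y)) :
    Subsingleton ((P.complex.linearYonedaObj R Y).homology i) := by
  have e := P.isoExt (R := R) i Y
  have h' : Subsingleton ((CategoryTheory.forget (ModuleCat R)).obj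
      (((Ext R (ModuleCat.{0} R) i).obj (Opposite.op Z)).obj Y)) := h
  have := ((CategoryTheory.forget (ModuleCat R)).mapIso e).toEquiv.symm.subsingleton
  exact this

end ExtLemmas

-- Concrete factorization lemmas from vanishing Ext
section Factor

lemma Fres_complex : (Fres R M).complex = Fcx R M := rfl

lemma factor_through (N : ModuleCat.{0} R) (i : ℕ)
    (h : Subsingleton (((Ext R (ModuleCat.{0} R) (i+1)).obj
      (Opposite.op (ModuleCat.of R M))).obj N))
    (φ : Xf R M (i+1) ⟶ N) (hφ : dF R M (i+1) ≫ φ = 0) :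
    ∃ ψ : Xf R M i ⟶ N, dF R M i ≫ ψ = φ := by
  haveI hs := subsingleton_homology_of_subsingleton_ext (Fres R M) (i+1) (Y := N) h
  have hz : Limits.IsZero (((Fres R M).complex.linearYonedaObj R N).homology (i+1)) :=
    ModuleCat.isZero_of_subsingleton _
  have hex := (HomologicalComplex.exactAt_iff_isZero_homology _ _).2 hz
  rw [HomologicalComplex.exactAt_iff' _ i (i+1) (i+2) (by simp) (by simp)] at hex
  rw [ShortComplex.moduleCat_exact_iff] at hex
  obtain ⟨ψ, hψ⟩ := hex φ (by
    show (Fcx R M).d (i+2) (i+1) ≫ φ = 0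
    rw [Fcx_d]
    exact hφ)
  refine ⟨ψ, ?_⟩
  have : (Fcx R M).d (i+1) i ≫ (ψ : Xf R M i ⟶ N) = φ := hψ
  rwa [Fcx_d] at this

lemma hom_zero_of_subsingleton_ext_zero
    (h : Subsingleton (((Ext R (ModuleCat.{0} R) 0).obj
      (Opposite.op (ModuleCat.of R M))).obj (ModuleCat.of R R)))
    (φ : ModuleCat.of R M ⟶ ModuleCat.of R R) : φ = 0 := by
  haveI hs := subsingleton_homology_of_subsingleton_ext (Fres R M) 0
    (Y := ModuleCat.of R R) h
  have hz : Limits.IsZero (((Fres R M).complex.linearYonedaObj R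
      (ModuleCat.of R R)).homology 0) := ModuleCat.isZero_of_subsingleton _
  have hex := (HomologicalComplex.exactAt_iff_isZero_homology _ _).2 hz
  rw [HomologicalComplex.exactAt_iff' _ 0 0 1 (by simp) (by simp)] at hex
  rw [ShortComplex.moduleCat_exact_iff] at hex
  obtain ⟨y, hy⟩ := hex (πF R M ≫ φ) (by
    show (Fcx R M).d 1 0 ≫ (πF R M ≫ φ) = 0
    rw [← Category.assoc]; erw [Fcx_d]
    have : dF R M 0 ≫ πF R M = 0 := by rw [← Fcx_d]; exact πF_w R M
    erw [this, Limits.zero_comp])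
  -- y lives in C.X 0 with C.d 0 0 y = πF ≫ φ; but d 0 0 = 0
  have h0 : (((Fres R M).complex.linearYonedaObj R (ModuleCat.of R R)).d 0 0) = 0 :=
    HomologicalComplex.shape _ _ _ (by simp)
  have hy' : (((Fres R M).complex.linearYonedaObj R (ModuleCat.of R R)).d 0 0) y
      = πF R M ≫ φ := hy
  rw [h0] at hy'
  have hπφ : πF R M ≫ φ = 0 := by rw [← hy']; rfl
  have hepi : Function.Surjective (pr R M 0) := (KM R M 0).p_surj
  apply ConcreteCategory.hom_ext
  intro x
  obtain ⟨y, rfl⟩ := hepi x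
  have := congrArg (fun (f : (Fcx R M).X 0 ⟶ ModuleCat.of R R) => f y) hπφ
  exact this

end Factor

-- Splitting lemmas
section Splitting

lemma section_of_retraction (n : ℕ)
    (ψ : (Xf R M n : Type) →ₗ[R] ((KM R M (n+1)).K : Type))
    (hψ : ∀ x : ((KM R M (n+1)).K : Type), ψ (ι R M n x) = x) :
    ∃ s : ((KM R M n).K : Type) →ₗ[R] (Xf R M n : Type),
      ∀ y, pr R M n (s y) = y := by
  have hι : ∀ z : ((KM R M (n+1)).K : Type), pr R M n (ι R M n z) = 0 :=
    fun z => z.2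
  set f : (LinearMap.ker ψ : Submodule R (Xf R M n)) →ₗ[R] ((KM R M n).K : Type) :=
    (pr R M n).comp (LinearMap.ker ψ).subtype with hf
  have hinj : Function.Injective f := by
    intro a b hab
    apply Subtype.ext
    have h0 : pr R M n (a.1 - b.1) = 0 := by
      rw [map_sub, sub_eq_zero]; exact hab
    have hk : ψ (a.1 - b.1) = ⟨a.1 - b.1, h0⟩ := hψ ⟨a.1 - b.1, h0⟩
    have hken : ψ (a.1 - b.1) = 0 := by
      rw [map_sub, (LinearMap.mem_ker).mp a.2, (LinearMap.mem_ker).mp b.2, sub_zero]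
    rw [hken] at hk
    have := congrArg Subtype.val hk.symm
    exact sub_eq_zero.mp this
  have hsurj : Function.Surjective f := by
    intro y
    obtain ⟨x0, hx⟩ := (KM R M n).p_surj y
    set x : (Xf R M n : Type) := x0 with hxdef
    have hx' : pr R M n x = y := hx
    have hker : ψ (x - ι R M n (ψ x)) = 0 := by
      rw [map_sub, hψ, sub_self]
    refine ⟨⟨x - ι R M n (ψ x), hker⟩, ?_⟩
    show pr R M n (x - ι R M n (ψ x)) = y
    rw [map_sub, hι, sub_zero, hx']
  set e := LinearEquiv.ofBijective f ⟨hinj, hsurj⟩ with he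
  refine ⟨(LinearMap.ker ψ).subtype.comp e.symm.toLinearMap, fun y => ?_⟩
  show pr R M n ((e.symm y : (LinearMap.ker ψ : Submodule R (Xf R M n))) : Xf R M n) = y
  have : f (e.symm y) = y := e.apply_symm_apply y
  exact this

lemma exists_section (n : ℕ)
    (h : Subsingleton (((Ext R (ModuleCat.{0} R) (n+1)).obj
      (Opposite.op (ModuleCat.of R M))).obj ((KM R M (n+1)).K))) :
    ∃ s : ((KM R M n).K : Type) →ₗ[R] (Xf R M n : Type),
      ∀ y, pr R M n (s y) = y := by
  obtain ⟨ψ, hψ⟩ := factor_through R M ((KM R M (n+1)).K) n h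
    (ModuleCat.ofHom (pr R M (n+1)))
    (by
      apply ConcreteCategory.hom_ext
      intro x
      exact pr_dF R M (n+1) x)
  refine section_of_retraction R M n ψ.hom (fun x => ?_)
  obtain ⟨y, rfl⟩ := (KM R M (n+1)).p_surj x
  exact congrArg (fun (g : Xf R M (n+1) ⟶ (KM R M (n+1)).K) => g y) hψ

end Splitting

-- Building short resolutions from projective syzygies
section Induction
open HomologicalComplex

variable {R}

lemma exists_res_of_tower_projective :
    ∀ (n : ℕ) (A : FgMod R), Module.Projective R ((A.tower n).K : Type) →
      ∃ P : ProjectiveResolution A.K, ∀ i, n < i → Limits.IsZero (P.complex.X i) := by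
  intro n
  induction n with
  | zero =>
    intro A h
    haveI hp : Projective A.K := (IsProjective.iff_projective.{0,0} _).mp h
    refine ⟨ProjectiveResolution.self A.K, fun i hi => ?_⟩
    exact HomologicalComplex.isZero_single_obj_X _ 0 _ i (by omega)
  | succ n ih =>
    intro A h
    rw [FgMod.tower_succ_eq] at h
    obtain ⟨P', hP'⟩ := ih A.next h
    haveI : Projective (ModuleCat.of R (Fin A.rk → R)) :=
      ModuleCat.projective_of_free.{0,0,0} (M := ModuleCat.of R (Fin A.rk → R))
        (Pi.basisFun R (Fin A.rk))
    set ε : P'.complex.X 0 ⟶ A.next.K :=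
      P'.π.f 0 ≫ (singleObjXSelf (ComplexShape.down ℕ) 0 A.next.K).hom with hε
    have hεsurj : Function.Surjective ε :=
      (ModuleCat.epi_iff_surjective ε).1 (by rw [hε]; exact epi_comp _ _)
    have hεd : P'.complex.d 1 0 ≫ ε = 0 := by
      rw [hε, ← Category.assoc, P'.complex_d_comp_π_f_zero, Limits.zero_comp]
    set f : P'.complex.X 0 ⟶ ModuleCat.of R (Fin A.rk → R) :=
      ε ≫ ModuleCat.ofHom (LinearMap.ker A.p).subtype with hf
    have hw : P'.complex.d 1 0 ≫ f = 0 := by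
      rw [hf]; exact (Category.assoc _ _ _).symm.trans (by rw [hεd]; exact Limits.zero_comp)
    set Q := ChainComplex.augment P'.complex f hw with hQ
    have hproj : ∀ m, Projective (Q.X m) := by
      rintro (_ | m)
      · exact ‹Projective (ModuleCat.of R (Fin A.rk → R))›
      · exact P'.projective m
    have hw0 : Q.d 1 0 ≫ ModuleCat.ofHom A.p = 0 := by
      apply ConcreteCategory.hom_ext
      intro x
      exact (ε x).2
    refine ⟨mkProjRes Q hproj (ModuleCat.ofHom A.p) hw0
      ((ModuleCat.epi_iff_surjective _).2 A.p_surj) ?_ ?_, ?_⟩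
    · rw [ShortComplex.moduleCat_exact_iff]
      intro x hx
      obtain ⟨y, hy⟩ := hεsurj ⟨x, hx⟩
      refine ⟨y, ?_⟩
      show (LinearMap.ker A.p).subtype (ε y) = x
      rw [hy]
      rfl
    · rintro (_ | m)
      · -- exactness at 1
        rw [HomologicalComplex.exactAt_iff' _ 2 1 0 (by simp) (by simp)]
        rw [ShortComplex.moduleCat_exact_iff]
        intro x hx
        have hx0 : ε x = 0 := by
          apply Subtype.ext
          exact hx
        have hπ0 : P'.π.f 0 x = 0 := by
          have h1 : (singleObjXSelf (ComplexShape.down ℕ) 0 A.next.K).hom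
              (P'.π.f 0 x) = 0 := hx0
          have h2 := congrArg ((singleObjXSelf (ComplexShape.down ℕ) 0 A.next.K).inv)
            h1
          exact h2
        have hex := P'.exact₀
        rw [ShortComplex.moduleCat_exact_iff] at hex
        obtain ⟨y, hy⟩ := hex x hπ0
        exact ⟨y, hy⟩
      · -- exactness at m + 2
        rw [HomologicalComplex.exactAt_iff' _ (m+3) (m+2) (m+1) (by simp) (by simp)]
        rw [ShortComplex.moduleCat_exact_iff]
        have hPe := P'.complex_exactAt_succ m
        rw [HomologicalComplex.exactAt_iff' _ (m+2) (m+1) m (by simp) (by simp)] at hPe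
        rw [ShortComplex.moduleCat_exact_iff] at hPe
        intro x hx
        obtain ⟨y, hy⟩ := hPe x hx
        exact ⟨y, hy⟩
    · rintro (_ | i) hi
      · omega
      · exact hP' i (by omega)

end Induction

section Wrapper

lemma hasProjResLengthLE_of_syzygy (n : ℕ)
    (h : Module.Projective R ((KM R M n).K : Type)) : HasProjResLengthLE R M n := by
  obtain ⟨P, hP⟩ := exists_res_of_tower_projective n (KM0 R M) h
  exact ⟨P, hP⟩

end Wrapper


/--
Let `R` be a commutative Noetherian ring and `M` a nonzero finitely generated `R`-module
with `projdim_R(M) < ∞`.  Then `projdim_R(M) = sup { i : Ext_R^i(M, R) ≠ 0 }`, the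
supremum taken in `ℕ∞`.
-/
theorem projDim_eq_iSup_ext (R : Type) [CommRing R] [IsNoetherianRing R]
    (M : Type) [AddCommGroup M] [Module R M] [Module.Finite R M] [Nontrivial M]
    (hfin : projDim R M ≠ ⊤) :
    projDim R M = ⨆ (i : ℕ) (_ : Nontrivial (extGroup R M R i)), (i : ℕ∞) := by
  classical
  have hex : ∃ n, HasProjResLengthLE R M n := by
    by_contra hno
    push_neg at hno
    apply hfin
    simp [projDim, iInf_neg, hno]
  obtain ⟨d, hfind⟩ : ∃ d, Nat.find hex = d := ⟨_, rfl⟩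
  obtain ⟨P, hP⟩ := Nat.find_spec hex
  rw [hfind] at hP
  have hfindspec := Nat.find_spec hex
  rw [hfind] at hfindspec
  have hproj : projDim R M = (d : ℕ∞) := by
    apply le_antisymm
    · exact iInf₂_le d hfindspec
    · refine le_iInf₂ (fun n hn => ?_)
      have := Nat.find_min' hex hn
      rw [hfind] at this
      exact_mod_cast this
  have hvanish : ∀ i, d < i → ∀ N : ModuleCat.{0} R,
      Subsingleton (((Ext R (ModuleCat.{0} R) i).obj
        (Opposite.op (ModuleCat.of R M))).obj N) := by
    intro i hi N
    exact subsingleton_of_isZero (isZero_ext_of_isZero P i (hP i hi))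
  have hnt : Nontrivial (extGroup R M R d) := by
    rw [← not_subsingleton_iff_nontrivial]
    intro hsub
    cases d with
    | zero =>
      obtain ⟨s, hs⟩ := exists_section R M 0 (hvanish 1 (by omega) _)
      have hzero : ∀ (φ : ModuleCat.of R M ⟶ ModuleCat.of R R), φ = 0 :=
        fun φ => hom_zero_of_subsingleton_ext_zero R M hsub φ
      have hM : ∀ y : ((KM R M 0).K : Type), y = 0 := by
        intro y
        have hs0 : s y = 0 := by
          funext j
          have hφ : (ModuleCat.ofHom ((LinearMap.proj j).comp s) :
              ModuleCat.of R M ⟶ ModuleCat.of R R) = 0 := hzero _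
          exact congrArg (fun (g : ModuleCat.of R M ⟶ ModuleCat.of R R) => g y) hφ
        have := hs y
        rw [hs0, map_zero] at this
        exact this.symm
      obtain ⟨a, b, hab⟩ := ‹Nontrivial M›
      exact hab ((hM a).trans (hM b).symm)
    | succ m =>
      obtain ⟨s, hs⟩ := exists_section R M (m+1) (hvanish (m+2) (by omega) _)
      -- every map K_{m+1} → R factors through ι m
      have hfactor : ∀ (φ : ((KM R M (m+1)).K : Type) →ₗ[R] R),
          ∃ h : Xf R M m ⟶ ModuleCat.of R R, ∀ x, h (ι R M m x) = φ x := by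
        intro φ
        obtain ⟨ψ, hψ⟩ := factor_through R M (ModuleCat.of R R) m hsub
          (ModuleCat.ofHom (φ.comp (pr R M (m+1))))
          (by
            apply ConcreteCategory.hom_ext
            intro x
            show φ (pr R M (m+1) (dF R M (m+1) x)) = 0
            rw [pr_dF, map_zero])
        refine ⟨ψ, fun x => ?_⟩
        obtain ⟨y, rfl⟩ := (KM R M (m+1)).p_surj x
        exact congrArg (fun (g : Xf R M (m+1) ⟶ ModuleCat.of R R) => g y) hψ
      -- assemble a map h : Xf m → Xf (m+1) with h ∘ ι = s
      set h : (Xf R M m : Type) →ₗ[R] (Xf R M (m+1) : Type) :=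
        LinearMap.pi (fun j => (hfactor ((LinearMap.proj j).comp s)).choose.hom) with hh
      have hhs : ∀ x, h (ι R M m x) = s x := by
        intro x
        funext j
        exact (hfactor ((LinearMap.proj j).comp s)).choose_spec x
      -- retraction of ι m
      set ψ' : (Xf R M m : Type) →ₗ[R] ((KM R M (m+1)).K : Type) :=
        (pr R M (m+1)).comp h with hψ'
      have hret : ∀ x, ψ' (ι R M m x) = x := by
        intro x
        show pr R M (m+1) (h (ι R M m x)) = x
        rw [hhs]
        exact hs x
      obtain ⟨s', hs'⟩ := section_of_retraction R M m ψ' hret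
      haveI hfree : Module.Projective R ((Xf R M m : Type)) :=
        Module.Projective.of_basis (Pi.basisFun R (Fin ((KM R M m).rk)))
      have hKm : Module.Projective R ((KM R M m).K : Type) :=
        Module.Projective.of_split s' (pr R M m) (by ext y; exact hs' y)
      exact Nat.find_min hex (by rw [hfind]; omega)
        (hasProjResLengthLE_of_syzygy R M m hKm)
  rw [hproj]
  apply le_antisymm
  · exact le_iSup₂ (f := fun (i : ℕ) (_ : Nontrivial (extGroup R M R i)) => (i : ℕ∞)) d hnt
  · refine iSup₂_le (fun i hi => ?_)
    have hid : i ≤ d := by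
      by_contra hgt
      push_neg at hgt
      exact (not_subsingleton_iff_nontrivial.mpr hi)
        (hvanish i hgt (ModuleCat.of R R))
    exact_mod_cast hid
end
end

section
/- Let T be a commutative ℚ_p-algebra, let L be a finite field extension of ℚ_p, and let M₁, M₂ be modules over T ⊗_{ℚ_p} L that are finite dimensional as L-vector spaces. For any s ∈ T ⊗_{ℚ_p} L and i ∈ {1,2}, let D_i(X, s) = det(1 − X·s | M_i) ∈ L[X] be the reversed characteristic polynomial of the L-linear endomorphism of M_i given by the action of s. If D₁(X, t ⊗ 1) divides D₂(X, t ⊗ 1) in L[X] for every t ∈ T, then D₁(X, s) divides D₂(X, s) in L[X] for every s ∈ T ⊗_{ℚ_p} L. -/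
open scoped TensorProduct

/-- For an algebra `B` over a commutative ring `L` and a `B`-module `M` with a compatible
`L`-module structure, the `L`-linear endomorphism of `M` given by multiplication by `s : B`. -/
noncomputable def smulEnd (L : Type) [CommRing L] {B : Type} [CommRing B] [Algebra L B]
    (M : Type) [AddCommGroup M] [Module L M] [Module B M] [IsScalarTower L B M]
    (s : B) : M →ₗ[L] M where
  toFun m := s • m
  map_add' := smul_add s
  map_smul' c m := smul_comm s c m

/-- The reversed characteristic polynomial `det(1 - X·f | M)` of an `L`-linear endomorphism
`f` of a finite-dimensional `L`-vector space `M`,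
i.e. `X^{dim M} · charpoly(f)(1/X)` via the standard polynomial reversal. -/
noncomputable def revCharPoly {L : Type} [Field L] {M : Type} [AddCommGroup M] [Module L M]
    [FiniteDimensional L M] (f : M →ₗ[L] M) : Polynomial L :=
  (LinearMap.charpoly f).reverse

/-- A multivariate polynomial over a field `L` which vanishes at all points with
coordinates in an infinite subfield `K` is zero. -/
lemma aux_mv_eq_zero {K : Type*} [Field K] [Infinite K] {L : Type*} [Field L] [Algebra K L]
    {σ : Type*} (w : MvPolynomial σ L)
    (hw : ∀ c : σ → K, MvPolynomial.eval (fun i => algebraMap K L (c i)) w = 0) :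
    w = 0 := by
  classical
  let b := Module.Basis.ofVectorSpace K L
  have hker : ∀ k, (fun wk => wk = (0 : MvPolynomial σ K))
      (∑ m ∈ w.support, MvPolynomial.monomial m (b.coord k (w.coeff m))) := by
    intro k
    apply MvPolynomial.funext (q := 0)
    intro c
    have hv : MvPolynomial.eval c
        (∑ m ∈ w.support, MvPolynomial.monomial m (b.coord k (w.coeff m)))
        = b.coord k (MvPolynomial.eval (fun i => algebraMap K L (c i)) w) := by
      conv_rhs => rw [MvPolynomial.as_sum w]
      rw [map_sum, map_sum, map_sum]
      refine Finset.sum_congr rfl fun m _ => ?_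
      rw [MvPolynomial.eval_monomial, MvPolynomial.eval_monomial]
      have hprod : (m.prod fun n e => (algebraMap K L (c n)) ^ e)
          = algebraMap K L (m.prod fun n e => (c n) ^ e) := by
        rw [Finsupp.prod, Finsupp.prod, map_prod]
        simp
      rw [hprod, mul_comm (MvPolynomial.coeff m w) ((algebraMap K L) _),
        ← Algebra.smul_def, map_smul, smul_eq_mul, mul_comm]
    rw [hv, hw c, map_zero, map_zero]
  ext m
  rw [MvPolynomial.coeff_zero, ← b.forall_coord_eq_zero_iff]
  intro k
  have h0 := hker k
  have := congrArg (MvPolynomial.coeff m) h0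
  rw [MvPolynomial.coeff_zero] at this
  rw [← this]
  rw [MvPolynomial.coeff_sum]
  by_cases hm : m ∈ w.support
  · rw [Finset.sum_eq_single m]
    · simp [MvPolynomial.coeff_monomial]
    · intro m' _ hne
      simp [MvPolynomial.coeff_monomial, hne]
    · intro hmm; exact absurd hm hmm
  · rw [MvPolynomial.notMem_support_iff] at hm
    rw [hm, map_zero]
    symm
    apply Finset.sum_eq_zero
    intro m' hm'
    rw [MvPolynomial.coeff_monomial]
    split
    · next heq =>
      subst heq
      simp [hm]
    · rfl

lemma aux_smulEnd_sum_smul (L : Type) [CommRing L] {B : Type} [CommRing B] [Algebra L B]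
    (M : Type) [AddCommGroup M] [Module L M] [Module B M] [IsScalarTower L B M]
    {ι : Type} (s : Finset ι) (x : ι → L) (b : ι → B) :
    smulEnd L M (∑ i ∈ s, x i • b i) = ∑ i ∈ s, x i • smulEnd L M (b i) := by
  ext m
  simp [smulEnd, Finset.sum_smul, smul_assoc]

lemma aux_generic_charpoly_spec {L : Type} [Field L] {ι : Type} [Fintype ι]
    {n : Type} [Fintype n] [DecidableEq n]
    (A : ι → Matrix n n L) (x : ι → L) :
    (Matrix.charpoly ((∑ i, (MvPolynomial.X i : MvPolynomial ι L) • (A i).map MvPolynomial.C :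
          Matrix n n (MvPolynomial ι L)))).map
        (MvPolynomial.eval x : MvPolynomial ι L →+* L)
      = Matrix.charpoly (∑ i, x i • A i) := by
  rw [← Matrix.charpoly_map]
  congr 1
  ext j k
  simp [Matrix.map_apply, Matrix.sum_apply]

lemma aux_reverse_map {R S : Type*} [CommRing R] [CommRing S] [Nontrivial S] (f : R →+* S)
    {P : Polynomial R} (hP : P.Monic) : (P.map f).reverse = P.reverse.map f := by
  unfold Polynomial.reverse
  rw [Polynomial.reflect_map, Polynomial.Monic.natDegree_map hP]

lemma aux_coe_map {R S : Type*} [CommSemiring R] [CommSemiring S] (f : R →+* S)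
    (p : Polynomial R) :
    (PowerSeries.map f (↑p) : PowerSeries S) = ↑(p.map f) := by
  ext n
  simp [PowerSeries.coeff_map, Polynomial.coeff_coe]

lemma aux_key_dvd {K L : Type} [Field K] [Infinite K] [Field L] [Algebra K L]
    {ι : Type} [Fintype ι]
    {n₁ n₂ : Type} [Fintype n₁] [DecidableEq n₁] [Fintype n₂] [DecidableEq n₂]
    (A : ι → Matrix n₁ n₁ L) (B : ι → Matrix n₂ n₂ L)
    (h : ∀ a : ι → K,
      (Matrix.charpoly (∑ i, algebraMap K L (a i) • A i)).reverse ∣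
        (Matrix.charpoly (∑ i, algebraMap K L (a i) • B i)).reverse)
    (x : ι → L) :
    (Matrix.charpoly (∑ i, x i • A i)).reverse ∣
      (Matrix.charpoly (∑ i, x i • B i)).reverse := by
  classical
  set R := MvPolynomial ι L with hR
  set P : Polynomial R := Matrix.charpoly
      ((∑ i, (MvPolynomial.X i : R) • (A i).map MvPolynomial.C : Matrix n₁ n₁ R)) with hPdef
  set Q : Polynomial R := Matrix.charpoly
      ((∑ i, (MvPolynomial.X i : R) • (B i).map MvPolynomial.C : Matrix n₂ n₂ R)) with hQdef
  have hPm : P.Monic := Matrix.charpoly_monic _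
  have hQm : Q.Monic := Matrix.charpoly_monic _
  have hQdeg : Q.natDegree = Fintype.card n₂ := Matrix.charpoly_natDegree_eq_dim _
  have hconst : PowerSeries.constantCoeff (R := R) ↑P.reverse = ((1 : Rˣ) : R) := by
    rw [← PowerSeries.coeff_zero_eq_constantCoeff_apply, Polynomial.coeff_coe,
      Polynomial.coeff_zero_reverse, hPm.leadingCoeff]
    rfl
  set iP : PowerSeries R := PowerSeries.invOfUnit ↑P.reverse 1 with hiP
  have hmulP : (↑P.reverse : PowerSeries R) * iP = 1 := PowerSeries.mul_invOfUnit _ _ hconst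
  set W : PowerSeries R := ↑Q.reverse * iP with hW
  have hmap : ∀ g : R →+* L, (↑(P.reverse.map g) : PowerSeries L) * PowerSeries.map g iP = 1 := by
    intro g
    rw [← aux_coe_map, ← map_mul, hmulP, map_one]
  have hmapW : ∀ g : R →+* L,
      PowerSeries.map g W = ↑(Q.reverse.map g) * PowerSeries.map g iP := by
    intro g
    rw [hW, map_mul, aux_coe_map]
  -- the generic specializations
  have hgenA : ∀ y : ι → L,
      (Matrix.charpoly (∑ i, y i • A i)).reverse = P.reverse.map (MvPolynomial.eval y) := by
    intro y
    rw [← aux_generic_charpoly_spec A y, aux_reverse_map _ hPm]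
  have hgenB : ∀ y : ι → L,
      (Matrix.charpoly (∑ i, y i • B i)).reverse = Q.reverse.map (MvPolynomial.eval y) := by
    intro y
    rw [← aux_generic_charpoly_spec B y, aux_reverse_map _ hQm]
  -- vanishing of high coefficients of W
  have hvan : ∀ j, Fintype.card n₂ < j → PowerSeries.coeff (R := R) j W = 0 := by
    intro j hj
    apply aux_mv_eq_zero (K := K)
    intro a
    set g : R →+* L := (MvPolynomial.eval (fun i => algebraMap K L (a i)) :
        MvPolynomial ι L →+* L) with hg
    obtain ⟨q, hq⟩ := h a
    rw [hgenA (fun i => algebraMap K L (a i)), hgenB (fun i => algebraMap K L (a i))] at hq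
    replace hq : Q.reverse.map g = P.reverse.map g * q := hq
    have h1 : (P.reverse.map g).coeff 0 = 1 := by
      rw [Polynomial.coeff_map, Polynomial.coeff_zero_reverse, hPm.leadingCoeff, map_one]
    have hPrne : P.reverse.map g ≠ 0 := by
      intro h0
      rw [h0, Polynomial.coeff_zero] at h1
      exact zero_ne_one h1
    have hqW : PowerSeries.map g W = ↑q := by
      rw [hmapW g, hq, Polynomial.coe_mul, mul_right_comm, hmap g, one_mul]
    have hqdeg : q.natDegree < j := by
      by_cases hq0 : q = 0
      · rw [hq0, Polynomial.natDegree_zero]; omega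
      · have hd := Polynomial.natDegree_mul hPrne hq0
        rw [← hq] at hd
        have h2 : (Q.reverse.map g).natDegree ≤ Fintype.card n₂ := by
          calc (Q.reverse.map g).natDegree ≤ Q.reverse.natDegree :=
                Polynomial.natDegree_map_le
            _ ≤ Q.natDegree := Q.reverse_natDegree_le
            _ = Fintype.card n₂ := hQdeg
        omega
    have := congrArg (PowerSeries.coeff (R := L) j) hqW
    rw [PowerSeries.coeff_map, Polynomial.coeff_coe,
      Polynomial.coeff_eq_zero_of_natDegree_lt hqdeg] at this
    exact this
  -- now specialize at the point x
  set gc : R →+* L := (MvPolynomial.eval x : MvPolynomial ι L →+* L) with hgc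
  set wq : Polynomial L := PowerSeries.trunc (Fintype.card n₂ + 1) (PowerSeries.map gc W)
    with hwq
  have hcoe : (↑wq : PowerSeries L) = PowerSeries.map gc W := by
    ext k
    rw [Polynomial.coeff_coe, hwq, PowerSeries.coeff_trunc]
    split
    · rfl
    · next hk =>
      rw [PowerSeries.coeff_map, hvan k (by omega), map_zero]
  refine ⟨wq, ?_⟩
  rw [hgenA x, hgenB x]
  apply Polynomial.coe_inj.mp
  rw [Polynomial.coe_mul, hcoe, hmapW gc, mul_left_comm, hmap gc, mul_one]

/--
Let `T` be a commutative `ℚ_p`-algebra, `L` a finite field extension of `ℚ_p`, and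
`M₁, M₂` modules over `T ⊗_{ℚ_p} L` that are finite dimensional as `L`-vector spaces.
Writing `D_i(X, s) = det(1 − X·s | M_i) ∈ L[X]` for the reversed characteristic polynomial
of the action of `s ∈ T ⊗_{ℚ_p} L` on `M_i`:  if `D₁(X, t ⊗ 1)` divides `D₂(X, t ⊗ 1)` in
`L[X]` for every `t ∈ T`, then `D₁(X, s)` divides `D₂(X, s)` in `L[X]` for every
`s ∈ T ⊗_{ℚ_p} L`.
-/
theorem revCharPoly_dvd_of_dvd_on_pure_tensors
    (p : ℕ) [Fact p.Prime]
    (L : Type) [Field L] [Algebra ℚ_[p] L] [FiniteDimensional ℚ_[p] L]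
    (T : Type) [CommRing T] [Algebra ℚ_[p] T]
    (M₁ : Type) [AddCommGroup M₁] [Module (L ⊗[ℚ_[p]] T) M₁] [Module L M₁]
    [IsScalarTower L (L ⊗[ℚ_[p]] T) M₁] [FiniteDimensional L M₁]
    (M₂ : Type) [AddCommGroup M₂] [Module (L ⊗[ℚ_[p]] T) M₂] [Module L M₂]
    [IsScalarTower L (L ⊗[ℚ_[p]] T) M₂] [FiniteDimensional L M₂]
    (h : ∀ t : T,
      revCharPoly (smulEnd L M₁ ((1 : L) ⊗ₜ[ℚ_[p]] t)) ∣
        revCharPoly (smulEnd L M₂ ((1 : L) ⊗ₜ[ℚ_[p]] t))) :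
    ∀ s : L ⊗[ℚ_[p]] T,
      revCharPoly (smulEnd L M₁ s) ∣ revCharPoly (smulEnd L M₂ s) := by
  classical
  intro s
  obtain ⟨S, hs⟩ := TensorProduct.exists_finset s
  let b₁ := Module.finBasis L M₁
  let b₂ := Module.finBasis L M₂
  set A : {y : L × T // y ∈ S} →
      Matrix (Fin (Module.finrank L M₁)) (Fin (Module.finrank L M₁)) L :=
    fun i => LinearMap.toMatrix b₁ b₁ (smulEnd L M₁ ((1 : L) ⊗ₜ[ℚ_[p]] (i : L × T).2))
    with hA
  set B : {y : L × T // y ∈ S} →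
      Matrix (Fin (Module.finrank L M₂)) (Fin (Module.finrank L M₂)) L :=
    fun i => LinearMap.toMatrix b₂ b₂ (smulEnd L M₂ ((1 : L) ⊗ₜ[ℚ_[p]] (i : L × T).2))
    with hB
  have hM : ∀ x : {y : L × T // y ∈ S} → L,
      LinearMap.charpoly
          (smulEnd L M₁ (∑ i, x i • ((1 : L) ⊗ₜ[ℚ_[p]] (i : L × T).2)))
        = Matrix.charpoly (∑ i, x i • A i) := by
    intro x
    rw [← LinearMap.charpoly_toMatrix
      (smulEnd L M₁ (∑ i, x i • ((1 : L) ⊗ₜ[ℚ_[p]] (i : L × T).2))) b₁]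
    congr 1
    rw [aux_smulEnd_sum_smul, map_sum]
    refine Finset.sum_congr rfl fun i _ => ?_
    rw [map_smul, hA]
  have hN : ∀ x : {y : L × T // y ∈ S} → L,
      LinearMap.charpoly
          (smulEnd L M₂ (∑ i, x i • ((1 : L) ⊗ₜ[ℚ_[p]] (i : L × T).2)))
        = Matrix.charpoly (∑ i, x i • B i) := by
    intro x
    rw [← LinearMap.charpoly_toMatrix
      (smulEnd L M₂ (∑ i, x i • ((1 : L) ⊗ₜ[ℚ_[p]] (i : L × T).2))) b₂]
    congr 1
    rw [aux_smulEnd_sum_smul, map_sum]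
    refine Finset.sum_congr rfl fun i _ => ?_
    rw [map_smul, hB]
  have hsum : s = ∑ i : {y : L × T // y ∈ S},
      ((i : L × T).1) • ((1 : L) ⊗ₜ[ℚ_[p]] (i : L × T).2) := by
    conv_lhs => rw [hs]
    rw [← Finset.sum_attach S (fun y => y.1 ⊗ₜ[ℚ_[p]] y.2), Finset.univ_eq_attach]
    refine Finset.sum_congr rfl fun i _ => ?_
    rw [TensorProduct.smul_tmul', smul_eq_mul, mul_one]
  have hpure : ∀ a : {y : L × T // y ∈ S} → ℚ_[p],
      ((1 : L) ⊗ₜ[ℚ_[p]] (∑ i, a i • (i : L × T).2) : L ⊗[ℚ_[p]] T)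
        = ∑ i, (algebraMap ℚ_[p] L (a i)) • ((1 : L) ⊗ₜ[ℚ_[p]] (i : L × T).2) := by
    intro a
    rw [TensorProduct.tmul_sum]
    refine Finset.sum_congr rfl fun i _ => ?_
    rw [TensorProduct.tmul_smul, algebraMap_smul]
  rw [hsum]
  unfold revCharPoly
  rw [hM (fun i => (i : L × T).1), hN (fun i => (i : L × T).1)]
  refine aux_key_dvd (K := ℚ_[p]) A B ?_ _
  intro a
  have h2 := h (∑ i, a i • (i : L × T).2)
  unfold revCharPoly at h2
  rw [hpure a, hM (fun i => algebraMap ℚ_[p] L (a i)),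
    hN (fun i => algebraMap ℚ_[p] L (a i))] at h2
  exact h2
end

section
/- Let R be a commutative ring, n a natural number, and let l, d, u be n×n matrices over R such that l is lower unitriangular (l_{ii} = 1 for all i and l_{ij} = 0 for i < j), u is upper unitriangular (u_{ii} = 1 for all i and u_{ij} = 0 for i > j), and d is diagonal (d_{ij} = 0 for i ≠ j). Set g = l·d·u. Then for every k with 1 ≤ k ≤ n, the leading principal minor m_k(g) (the determinant of the upper-left k×k submatrix of g) equals the product d_{11}·d_{22}⋯d_{kk}. Consequently, if R is a field and all diagonal entries d_{ii} are nonzero, then d_{kk} = m_k(g)·m_{k−1}(g)^{−1} for all k (with m_0(g) = 1), i.e. d = diag(m₁(g), m₁(g)^{−1}m₂(g), …, m_{n−1}(g)^{−1}·det(g)). -/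
/-- The `k`-th leading principal minor of an `n × n` matrix `g`: the determinant of the
submatrix of `g` consisting of the first `k` rows and first `k` columns (`m_0(g) = 1`). -/
def leadingMinor {R : Type} [CommRing R] {n : ℕ} (g : Matrix (Fin n) (Fin n) R)
    (k : ℕ) (hk : k ≤ n) : R :=
  (g.submatrix (Fin.castLE hk) (Fin.castLE hk)).det

open Matrix Finset in

lemma ldu_apply {R : Type} [CommRing R] {n : ℕ} (l d u : Matrix (Fin n) (Fin n) R)
    (hd : ∀ i j : Fin n, i ≠ j → d i j = 0) (i j : Fin n) :
    (l * d * u) i j = ∑ m : Fin n, l i m * d m m * u m j := by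
  rw [Matrix.mul_apply]
  refine Finset.sum_congr rfl fun m _ => ?_
  congr 1
  rw [Matrix.mul_apply]
  rw [Finset.sum_eq_single m]
  · intro b _ hb; rw [hd b m hb, mul_zero]
  · intro h; exact absurd (Finset.mem_univ m) h

lemma minor_key {R : Type} [CommRing R] {n : ℕ} (l d u : Matrix (Fin n) (Fin n) R)
    (hl1 : ∀ i, l i i = 1) (hl0 : ∀ i j : Fin n, i < j → l i j = 0)
    (hu1 : ∀ i, u i i = 1) (hu0 : ∀ i j : Fin n, j < i → u i j = 0)
    (hd : ∀ i j : Fin n, i ≠ j → d i j = 0) (k : ℕ) (hk : k ≤ n) :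
    leadingMinor (l * d * u) k hk =
      ∏ i : Fin k, d (Fin.castLE hk i) (Fin.castLE hk i) := by
  set c := Fin.castLE hk with hc
  set L := l.submatrix c c
  set D := d.submatrix c c
  set U := u.submatrix c c
  have hL0 : ∀ i j : Fin k, i < j → L i j = 0 := fun i j h => hl0 _ _ (by exact Fin.lt_def.2 (Fin.lt_def.1 h))
  have hU0 : ∀ i j : Fin k, j < i → U i j = 0 := fun i j h => hu0 _ _ (by exact Fin.lt_def.2 (Fin.lt_def.1 h))
  have hD : ∀ i j : Fin k, i ≠ j → D i j = 0 := fun i j h =>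
    hd _ _ (fun he => h (Fin.castLE_injective hk he))
  have hsub : (l * d * u).submatrix c c = L * D * U := by
    ext i j
    rw [Matrix.submatrix_apply, ldu_apply l d u hd, ldu_apply L D U hD]
    have h1 : ∀ m : Fin k, L i m * D m m * U m j = l (c i) (c m) * d (c m) (c m) * u (c m) (c j) :=
      fun m => rfl
    simp_rw [h1]
    have h2 : ∑ x : Fin k, l (c i) (c x) * d (c x) (c x) * u (c x) (c j)
        = ∑ m ∈ Finset.univ.map (Fin.castLEEmb hk), l (c i) m * d m m * u m (c j) := by
      rw [Finset.sum_map]; rfl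
    rw [h2]
    refine (Finset.sum_subset (Finset.subset_univ _) fun x _ hx => ?_).symm
    have hxk : k ≤ x.val := by
      by_contra h
      exact hx (Finset.mem_map.2 ⟨⟨x.val, by omega⟩, Finset.mem_univ _, rfl⟩)
    have : c i < x := by
      have : (c i).val = i.val := rfl
      exact Fin.lt_def.2 (by omega)
    rw [hl0 _ _ this, zero_mul, zero_mul]
  rw [leadingMinor, hsub, Matrix.det_mul, Matrix.det_mul]
  have hLdet : L.det = 1 := by
    have hLtri : L.BlockTriangular OrderDual.toDual := fun i j h => hL0 _ _ h
    rw [Matrix.det_of_lowerTriangular L hLtri]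
    exact Finset.prod_eq_one fun i _ => hl1 _
  have hUdet : U.det = 1 := by
    have hUtri : U.BlockTriangular id := fun i j h => hU0 _ _ h
    rw [Matrix.det_of_upperTriangular hUtri]
    exact Finset.prod_eq_one fun i _ => hu1 _
  have hDdet : D.det = ∏ i : Fin k, d (c i) (c i) := by
    have hDtri : D.BlockTriangular id := fun i j h => hD _ _ (ne_of_gt h)
    rw [Matrix.det_of_upperTriangular hDtri]
    rfl
  rw [hLdet, hUdet, hDdet, one_mul, mul_one]

/--
Let `R` be a commutative ring and `l, d, u` be `n × n` matrices over `R` with `l` lower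
unitriangular, `u` upper unitriangular and `d` diagonal, and set `g = l·d·u`.  Then for
every `1 ≤ k ≤ n` the `k`-th leading principal minor of `g` equals `d_{11}⋯d_{kk}`.
Consequently, if `R` is a field and all diagonal entries of `d` are nonzero, then
`d_{kk} = m_k(g)·m_{k−1}(g)⁻¹` for all `k` (with `m_0(g) = 1`).
-/
theorem leadingMinor_of_LDU :
    (∀ (R : Type) [CommRing R] (n : ℕ) (l d u : Matrix (Fin n) (Fin n) R),
      (∀ i, l i i = 1) → (∀ i j : Fin n, i < j → l i j = 0) →
      (∀ i, u i i = 1) → (∀ i j : Fin n, j < i → u i j = 0) →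
      (∀ i j : Fin n, i ≠ j → d i j = 0) →
      ∀ (k : ℕ) (_ : 1 ≤ k) (hk : k ≤ n),
        leadingMinor (l * d * u) k hk =
          ∏ i : Fin k, d (Fin.castLE hk i) (Fin.castLE hk i)) ∧
    (∀ (K : Type) [Field K] (n : ℕ) (l d u : Matrix (Fin n) (Fin n) K),
      (∀ i, l i i = 1) → (∀ i j : Fin n, i < j → l i j = 0) →
      (∀ i, u i i = 1) → (∀ i j : Fin n, j < i → u i j = 0) →
      (∀ i j : Fin n, i ≠ j → d i j = 0) →
      (∀ i, d i i ≠ 0) →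
      ∀ (k : ℕ) (hk1 : 1 ≤ k) (hk : k ≤ n),
        d ⟨k - 1, by omega⟩ ⟨k - 1, by omega⟩ =
          leadingMinor (l * d * u) k hk *
            (leadingMinor (l * d * u) (k - 1) (by omega))⁻¹) := by
  constructor
  · intro R _ n l d u hl1 hl0 hu1 hu0 hd k _ hk
    exact minor_key l d u hl1 hl0 hu1 hu0 hd k hk
  · intro K _ n l d u hl1 hl0 hu1 hu0 hd hdnz k hk1 hk
    obtain ⟨m, rfl⟩ : ∃ m, k = m + 1 := ⟨k - 1, by omega⟩
    have hm : m ≤ n := by omega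
    rw [minor_key l d u hl1 hl0 hu1 hu0 hd (m + 1) hk,
      minor_key l d u hl1 hl0 hu1 hu0 hd (m + 1 - 1) (by omega)]
    simp only [Nat.add_sub_cancel]
    rw [Fin.prod_univ_castSucc]
    have hP : (∏ i : Fin m, d (Fin.castLE hm i) (Fin.castLE hm i)) ≠ 0 :=
      Finset.prod_ne_zero_iff.2 fun i _ => hdnz _
    have hc1 : (fun i : Fin m => d (Fin.castLE hk i.castSucc) (Fin.castLE hk i.castSucc)) =
        fun i : Fin m => d (Fin.castLE hm i) (Fin.castLE hm i) := rfl
    have hc2 : d (Fin.castLE hk (Fin.last m)) (Fin.castLE hk (Fin.last m)) =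
        d ⟨m, by omega⟩ ⟨m, by omega⟩ := rfl
    rw [hc1, hc2]
    field_simp
    exact (mul_div_cancel_right₀ _ hP).symm
end
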